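/- For a simple graph G on N ≥ 2 vertices with complement G^c, the variances of S_N for G^c and G satisfy Var(H_{G^c}) = Var(H_G) + 1 − 2·E(H_G)/(N−1), where E(H_G) = 2ℓ_G/N. -/

import Mathlib

section Aux
open Finset Equiv

private lemma count1 (N : ℕ) (i k : Fin N) :
    ∑ π : Equiv.Perm (Fin N), (if π i = k then (1:ℚ) else 0)
      = (Nat.factorial (N-1) : ℚ) := by
  have hconst : ∀ k' : Fin N,
      ∑ π : Equiv.Perm (Fin N), (if π i = k' then (1:ℚ) else 0)
        = ∑ π : Equiv.Perm (Fin N), (if π i = k then (1:ℚ) else 0) := by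
    intro k'
    refine Fintype.sum_equiv (Equiv.mulLeft (Equiv.swap k k')) _ _ ?_
    intro π
    have h : (Equiv.swap k k') (π i) = k ↔ π i = k' := by
      constructor
      · intro h
        have := congrArg (Equiv.swap k k') h
        simpa [Equiv.swap_apply_left] using this
      · intro h; rw [h]; exact Equiv.swap_apply_right k k'
    simp [Equiv.Perm.mul_apply, h]
  have hsum : ∑ k' : Fin N, ∑ π : Equiv.Perm (Fin N),
      (if π i = k' then (1:ℚ) else 0) = (Nat.factorial N : ℚ) := by
    rw [Finset.sum_comm]
    simp [Fintype.card_perm]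
  rw [Finset.sum_congr rfl (fun k' _ => hconst k'), Finset.sum_const,
    Finset.card_univ, Fintype.card_fin, nsmul_eq_mul] at hsum
  have hN : 0 < N := i.pos
  have hfac : (N : ℚ) * (Nat.factorial (N-1) : ℚ) = (Nat.factorial N : ℚ) := by
    rw [← Nat.cast_mul, Nat.mul_factorial_pred hN.ne']
  have hNne : (N : ℚ) ≠ 0 := by positivity
  exact mul_left_cancel₀ hNne (hsum.trans hfac.symm)

private lemma twoTrans (N : ℕ) (k l k' l' : Fin N) (hkl : k ≠ l) (h' : k' ≠ l') :
    ∃ σ : Equiv.Perm (Fin N), σ k' = k ∧ σ l' = l := by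
  refine ⟨Equiv.swap k (Equiv.swap l l' k') * Equiv.swap l l', ?_, ?_⟩
  · simp [Equiv.Perm.mul_apply, Equiv.swap_apply_left]
  · have h1 : (Equiv.swap l l') l' = l := Equiv.swap_apply_right l l'
    have h2 : Equiv.swap l l' k' ≠ l := by
      intro h
      exact h' ((Equiv.swap l l').injective (h.trans h1.symm))
    simp only [Equiv.Perm.mul_apply, h1]
    exact Equiv.swap_apply_of_ne_of_ne hkl.symm (Ne.symm h2)

private lemma count2 (N : ℕ) (i j k l : Fin N) (hij : i ≠ j) (hkl : k ≠ l) :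
    ∑ π : Equiv.Perm (Fin N), (if π i = k ∧ π j = l then (1:ℚ) else 0)
      = (Nat.factorial (N-2) : ℚ) := by
  set C : ℚ := ∑ π : Equiv.Perm (Fin N), (if π i = k ∧ π j = l then (1:ℚ) else 0) with hC
  have hconst : ∀ k' l' : Fin N, k' ≠ l' →
      ∑ π : Equiv.Perm (Fin N), (if π i = k' ∧ π j = l' then (1:ℚ) else 0) = C := by
    intro k' l' h'
    obtain ⟨σ, hσk, hσl⟩ := twoTrans N k l k' l' hkl h'
    rw [hC]
    refine Fintype.sum_equiv (Equiv.mulLeft σ) _ _ ?_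
    intro π
    have e1 : σ (π i) = k ↔ π i = k' := by
      rw [← hσk]; exact ⟨fun h => σ.injective h, fun h => by rw [h]⟩
    have e2 : σ (π j) = l ↔ π j = l' := by
      rw [← hσl]; exact ⟨fun h => σ.injective h, fun h => by rw [h]⟩
    simp [Equiv.Perm.mul_apply, e1, e2]
  have hdiag : ∀ π : Equiv.Perm (Fin N), ∀ k' : Fin N,
      (if π i = k' ∧ π j = k' then (1:ℚ) else 0) = 0 := by
    intro π k'
    rw [if_neg]
    rintro ⟨h1, h2⟩
    exact hij (π.injective (h1.trans h2.symm))
  have htotal : ∑ k' : Fin N, ∑ l' : Fin N, ∑ π : Equiv.Perm (Fin N),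
      (if π i = k' ∧ π j = l' then (1:ℚ) else 0) = (Nat.factorial N : ℚ) := by
    rw [Finset.sum_congr rfl (fun (k' : Fin N) (_ : k' ∈ Finset.univ) =>
      (Finset.sum_comm (s := Finset.univ) (t := Finset.univ)
        (f := fun (l' : Fin N) (π : Equiv.Perm (Fin N)) =>
          if π i = k' ∧ π j = l' then (1:ℚ) else 0)))]
    rw [Finset.sum_comm]
    rw [show (Nat.factorial N : ℚ) = ∑ _π : Equiv.Perm (Fin N), (1:ℚ) by
      simp [Fintype.card_perm]]
    refine Finset.sum_congr rfl (fun π _ => ?_)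
    simp [ite_and, Finset.sum_ite_eq]
  have hstep : ∀ k' l' : Fin N,
      ∑ π : Equiv.Perm (Fin N), (if π i = k' ∧ π j = l' then (1:ℚ) else 0)
        = if k' = l' then 0 else C := by
    intro k' l'
    by_cases h : k' = l'
    · subst h
      simp only [if_pos rfl]
      exact Finset.sum_eq_zero (fun π _ => hdiag π k')
    · rw [if_neg h]; exact hconst k' l' h
  rw [Finset.sum_congr rfl (fun k' _ => Finset.sum_congr rfl (fun l' _ => hstep k' l'))] at htotal
  have hinner : ∀ k' : Fin N, ∑ l' : Fin N, (if k' = l' then (0:ℚ) else C)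
      = (N : ℚ) * C - C := by
    intro k'
    have : ∀ l' : Fin N, (if k' = l' then (0:ℚ) else C) = C - (if k' = l' then C else 0) := by
      intro l'; by_cases h : k' = l' <;> simp [h]
    rw [Finset.sum_congr rfl (fun l' _ => this l'), Finset.sum_sub_distrib,
      Finset.sum_ite_eq, if_pos (Finset.mem_univ k'), Finset.sum_const,
      Finset.card_univ, Fintype.card_fin, nsmul_eq_mul]
  rw [Finset.sum_congr rfl (fun k' _ => hinner k'), Finset.sum_const,
    Finset.card_univ, Fintype.card_fin, nsmul_eq_mul] at htotal
  -- htotal : N * (N * C - C) = N!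
  have hN2 : 2 ≤ N := by
    have h1 : i.val ≠ j.val := fun h => hij (Fin.ext h)
    have := i.isLt; have := j.isLt
    omega
  have hfac : (N : ℚ) * ((N:ℚ) - 1) * (Nat.factorial (N-2) : ℚ) = (Nat.factorial N : ℚ) := by
    have h1 : (N-1) * Nat.factorial (N-1-1) = Nat.factorial (N-1) :=
      Nat.mul_factorial_pred (by omega)
    have h2 : N * Nat.factorial (N-1) = Nat.factorial N :=
      Nat.mul_factorial_pred (by omega)
    have h3 : N - 1 - 1 = N - 2 := by omega
    rw [h3] at h1
    have : ((N * ((N-1) * Nat.factorial (N-2)) : ℕ) : ℚ) = (Nat.factorial N : ℚ) := by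
      rw [h1, h2]
    push_cast at this
    rw [Nat.cast_sub (by omega)] at this
    push_cast at this
    linarith [this]
  have hNZ : (N : ℚ) ≠ 0 := by
    have : 0 < N := by omega
    positivity
  have hN1Z : (N : ℚ) - 1 ≠ 0 := by
    have : (2:ℚ) ≤ (N:ℚ) := by exact_mod_cast hN2
    linarith
  have key : (N:ℚ) * (((N:ℚ) - 1) * C) = (N:ℚ) * (((N:ℚ)-1) * (Nat.factorial (N-2) : ℚ)) := by
    rw [show (N:ℚ)*(((N:ℚ)-1)*(Nat.factorial (N-2):ℚ)) = (N:ℚ)*((N:ℚ)-1)*(Nat.factorial (N-2):ℚ) from (mul_assoc _ _ _).symm, hfac, ← htotal]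
    ring
  exact mul_left_cancel₀ hN1Z (mul_left_cancel₀ hNZ key)



private lemma expand_adj (N : ℕ) (G : SimpleGraph (Fin N)) [DecidableRel G.Adj]
    (π : Equiv.Perm (Fin N)) (i : Fin N) :
    (if G.Adj i (π i) then (1:ℚ) else 0)
      = ∑ k, (if G.Adj i k then (1:ℚ) else 0) * (if π i = k then 1 else 0) := by
  rw [Finset.sum_eq_single (π i)]
  · simp
  · intro k _ hk
    simp [Ne.symm hk]
  · simp

private lemma sumS (N : ℕ) (G : SimpleGraph (Fin N)) [DecidableRel G.Adj] :
    ∑ π : Equiv.Perm (Fin N), (∑ i, if G.Adj i (π i) then (1:ℚ) else 0)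
      = (∑ i, ∑ k, if G.Adj i k then (1:ℚ) else 0) * (Nat.factorial (N-1) : ℚ) := by
  have e1 : ∀ π : Equiv.Perm (Fin N),
      (∑ i, if G.Adj i (π i) then (1:ℚ) else 0)
        = ∑ i, ∑ k, (if G.Adj i k then (1:ℚ) else 0) * (if π i = k then 1 else 0) :=
    fun π => Finset.sum_congr rfl (fun i _ => expand_adj N G π i)
  rw [Finset.sum_congr rfl (fun π _ => e1 π)]
  have e2 : ∑ π : Equiv.Perm (Fin N), ∑ i : Fin N,
        ∑ k, (if G.Adj i k then (1:ℚ) else 0) * (if π i = k then 1 else 0)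
      = ∑ i : Fin N, ∑ π : Equiv.Perm (Fin N),
        ∑ k, (if G.Adj i k then (1:ℚ) else 0) * (if π i = k then 1 else 0) :=
    Finset.sum_comm
  rw [e2]
  rw [Finset.sum_mul]
  refine Finset.sum_congr rfl (fun i _ => ?_)
  have e3 : ∑ π : Equiv.Perm (Fin N),
        ∑ k, (if G.Adj i k then (1:ℚ) else 0) * (if π i = k then 1 else 0)
      = ∑ k, ∑ π : Equiv.Perm (Fin N),
        (if G.Adj i k then (1:ℚ) else 0) * (if π i = k then 1 else 0) :=
    Finset.sum_comm
  rw [e3, Finset.sum_mul]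
  refine Finset.sum_congr rfl (fun k _ => ?_)
  rw [← Finset.mul_sum, count1 N i k]

private lemma sumFix (N : ℕ) :
    ∑ π : Equiv.Perm (Fin N), (∑ i, if π i = i then (1:ℚ) else 0)
      = (N : ℚ) * (Nat.factorial (N-1) : ℚ) := by
  have e : ∑ π : Equiv.Perm (Fin N), (∑ i, if π i = i then (1:ℚ) else 0)
      = ∑ i : Fin N, ∑ π : Equiv.Perm (Fin N), (if π i = i then (1:ℚ) else 0) :=
    Finset.sum_comm
  rw [e, Finset.sum_congr rfl (fun i _ => count1 N i i), Finset.sum_const,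
    Finset.card_univ, Fintype.card_fin, nsmul_eq_mul]

private lemma ind_mul_ind (p q : Prop) [Decidable p] [Decidable q] :
    (if p then (1:ℚ) else 0) * (if q then (1:ℚ) else 0) = if p ∧ q then (1:ℚ) else 0 := by
  by_cases hp : p <;> by_cases hq : q <;> simp [hp, hq]

private lemma sumFixSq (N : ℕ) :
    ∑ π : Equiv.Perm (Fin N), (∑ i, if π i = i then (1:ℚ) else 0) ^ 2
      = (N : ℚ) * (Nat.factorial (N-1) : ℚ)
        + (N : ℚ) * ((N : ℚ) - 1) * (Nat.factorial (N-2) : ℚ) := by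
  have e1 : ∀ π : Equiv.Perm (Fin N),
      (∑ i, if π i = i then (1:ℚ) else 0) ^ 2
        = ∑ i : Fin N, ∑ j : Fin N, (if π i = i ∧ π j = j then (1:ℚ) else 0) := by
    intro π
    rw [sq, Finset.sum_mul_sum]
    exact Finset.sum_congr rfl (fun i _ => Finset.sum_congr rfl
      (fun j _ => ind_mul_ind _ _))
  rw [Finset.sum_congr rfl (fun π _ => e1 π)]
  have e2 : ∑ π : Equiv.Perm (Fin N), ∑ i : Fin N, ∑ j : Fin N,
        (if π i = i ∧ π j = j then (1:ℚ) else 0)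
      = ∑ i : Fin N, ∑ π : Equiv.Perm (Fin N), ∑ j : Fin N,
        (if π i = i ∧ π j = j then (1:ℚ) else 0) := Finset.sum_comm
  have e3 : ∀ i : Fin N, ∑ π : Equiv.Perm (Fin N), ∑ j : Fin N,
        (if π i = i ∧ π j = j then (1:ℚ) else 0)
      = ∑ j : Fin N, ∑ π : Equiv.Perm (Fin N),
        (if π i = i ∧ π j = j then (1:ℚ) else 0) := fun i => Finset.sum_comm
  rw [e2, Finset.sum_congr rfl (fun i _ => e3 i)]
  have e4 : ∀ i j : Fin N, ∑ π : Equiv.Perm (Fin N),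
        (if π i = i ∧ π j = j then (1:ℚ) else 0)
      = if i = j then (Nat.factorial (N-1) : ℚ) else (Nat.factorial (N-2) : ℚ) := by
    intro i j
    by_cases h : i = j
    · subst h
      rw [if_pos rfl, ← count1 N i i]
      exact Finset.sum_congr rfl (fun π _ => by by_cases hp : π i = i <;> simp [hp])
    · rw [if_neg h]
      exact count2 N i j i j h h
  rw [Finset.sum_congr rfl (fun i _ => Finset.sum_congr rfl (fun j _ => e4 i j))]
  have e5 : ∀ i : Fin N, ∑ j : Fin N,
      (if i = j then (Nat.factorial (N-1) : ℚ) else (Nat.factorial (N-2) : ℚ))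
        = (Nat.factorial (N-1) : ℚ) + ((N:ℚ) - 1) * (Nat.factorial (N-2) : ℚ) := by
    intro i
    have : ∀ j : Fin N, (if i = j then (Nat.factorial (N-1) : ℚ) else (Nat.factorial (N-2) : ℚ))
        = (Nat.factorial (N-2) : ℚ)
          + (if i = j then ((Nat.factorial (N-1) : ℚ) - (Nat.factorial (N-2):ℚ)) else 0) := by
      intro j; by_cases h : i = j <;> simp [h]
    rw [Finset.sum_congr rfl (fun j _ => this j), Finset.sum_add_distrib,
      Finset.sum_ite_eq, if_pos (Finset.mem_univ i), Finset.sum_const,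
      Finset.card_univ, Fintype.card_fin, nsmul_eq_mul]
    ring
  rw [Finset.sum_congr rfl (fun i _ => e5 i), Finset.sum_const,
    Finset.card_univ, Fintype.card_fin, nsmul_eq_mul]
  ring

private lemma inner2 (N : ℕ) (i k : Fin N) (hik : i ≠ k) :
    ∑ π : Equiv.Perm (Fin N),
        (if π i = k then (1:ℚ) else 0) * (∑ j, if π j = j then (1:ℚ) else 0)
      = ((N:ℚ) - 2) * (Nat.factorial (N-2) : ℚ) := by
  have e1 : ∀ π : Equiv.Perm (Fin N),
      (if π i = k then (1:ℚ) else 0) * (∑ j, if π j = j then (1:ℚ) else 0)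
        = ∑ j : Fin N, (if π i = k ∧ π j = j then (1:ℚ) else 0) := by
    intro π
    rw [Finset.mul_sum]
    exact Finset.sum_congr rfl (fun j _ => ind_mul_ind _ _)
  rw [Finset.sum_congr rfl (fun π _ => e1 π)]
  have e2 : ∑ π : Equiv.Perm (Fin N), ∑ j : Fin N,
        (if π i = k ∧ π j = j then (1:ℚ) else 0)
      = ∑ j : Fin N, ∑ π : Equiv.Perm (Fin N),
        (if π i = k ∧ π j = j then (1:ℚ) else 0) := Finset.sum_comm
  rw [e2]
  have e3 : ∀ j : Fin N, ∑ π : Equiv.Perm (Fin N),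
        (if π i = k ∧ π j = j then (1:ℚ) else 0)
      = (Nat.factorial (N-2) : ℚ)
          - (if j = i then (Nat.factorial (N-2) : ℚ) else 0)
          - (if j = k then (Nat.factorial (N-2) : ℚ) else 0) := by
    intro j
    by_cases hji : j = i
    · subst hji
      rw [if_pos rfl, if_neg hik]
      rw [Finset.sum_eq_zero (fun π _ => ?_)]
      · ring
      · rw [if_neg]
        rintro ⟨h1, h2⟩
        exact hik (h2.symm.trans h1)
    · by_cases hjk : j = k
      · subst hjk
        rw [if_neg hji, if_pos rfl]
        rw [Finset.sum_eq_zero (fun π _ => ?_)]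
        · ring
        · rw [if_neg]
          rintro ⟨h1, h2⟩
          exact hik (π.injective (h1.trans h2.symm))
      · rw [if_neg hji, if_neg hjk,
          count2 N i j k j (fun h => hji h.symm) (fun h => hjk h.symm)]
        ring
  rw [Finset.sum_congr rfl (fun j _ => e3 j)]
  rw [Finset.sum_sub_distrib, Finset.sum_sub_distrib, Finset.sum_const,
    Finset.card_univ, Fintype.card_fin, nsmul_eq_mul,
    Finset.sum_ite_eq', if_pos (Finset.mem_univ i),
    Finset.sum_ite_eq', if_pos (Finset.mem_univ k)]
  ring

private lemma sumFixS (N : ℕ) (G : SimpleGraph (Fin N)) [DecidableRel G.Adj] :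
    ∑ π : Equiv.Perm (Fin N),
        (∑ j, if π j = j then (1:ℚ) else 0) * (∑ i, if G.Adj i (π i) then (1:ℚ) else 0)
      = (∑ i, ∑ k, if G.Adj i k then (1:ℚ) else 0)
          * (((N:ℚ) - 2) * (Nat.factorial (N-2) : ℚ)) := by
  have e1 : ∀ π : Equiv.Perm (Fin N),
      (∑ j, if π j = j then (1:ℚ) else 0) * (∑ i, if G.Adj i (π i) then (1:ℚ) else 0)
        = ∑ i : Fin N, ∑ k : Fin N, (if G.Adj i k then (1:ℚ) else 0)
            * ((if π i = k then (1:ℚ) else 0) * (∑ j, if π j = j then (1:ℚ) else 0)) := by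
    intro π
    rw [mul_comm, Finset.sum_mul]
    refine Finset.sum_congr rfl (fun i _ => ?_)
    rw [expand_adj N G π i, Finset.sum_mul]
    exact Finset.sum_congr rfl (fun kk _ => by ring)
  rw [Finset.sum_congr rfl (fun π _ => e1 π)]
  have e2 : ∑ π : Equiv.Perm (Fin N), ∑ i : Fin N, ∑ k : Fin N,
        ((if G.Adj i k then (1:ℚ) else 0)
          * ((if π i = k then (1:ℚ) else 0) * (∑ j, if π j = j then (1:ℚ) else 0)))
      = ∑ i : Fin N, ∑ π : Equiv.Perm (Fin N), ∑ k : Fin N,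
        ((if G.Adj i k then (1:ℚ) else 0)
          * ((if π i = k then (1:ℚ) else 0) * (∑ j, if π j = j then (1:ℚ) else 0))) :=
    Finset.sum_comm
  have e3 : ∀ i : Fin N, ∑ π : Equiv.Perm (Fin N), ∑ k : Fin N,
        ((if G.Adj i k then (1:ℚ) else 0)
          * ((if π i = k then (1:ℚ) else 0) * (∑ j, if π j = j then (1:ℚ) else 0)))
      = ∑ k : Fin N, ∑ π : Equiv.Perm (Fin N),
        ((if G.Adj i k then (1:ℚ) else 0)
          * ((if π i = k then (1:ℚ) else 0) * (∑ j, if π j = j then (1:ℚ) else 0))) :=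
    fun i => Finset.sum_comm
  rw [e2, Finset.sum_congr rfl (fun i _ => e3 i), Finset.sum_mul]
  refine Finset.sum_congr rfl (fun i _ => ?_)
  rw [Finset.sum_mul]
  refine Finset.sum_congr rfl (fun k _ => ?_)
  rw [← Finset.mul_sum]
  by_cases h : G.Adj i k
  · rw [inner2 N i k h.ne]
  · simp [h]

end Aux

open Finset Equiv





/-- The mean of `S_N(π) = ∑_i (A_G)_{i,π(i)}` over a uniformly random permutation. -/
def meanQ (N : ℕ) (G : SimpleGraph (Fin N)) [DecidableRel G.Adj] : ℚ :=
  (∑ π : Equiv.Perm (Fin N), ∑ i, if G.Adj i (π i) then (1 : ℚ) else 0) /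
    (Nat.factorial N : ℚ)

/-- The variance of `S_N(π)` over a uniformly random permutation. -/
def varQ (N : ℕ) (G : SimpleGraph (Fin N)) [DecidableRel G.Adj] : ℚ :=
  (∑ π : Equiv.Perm (Fin N), (∑ i, if G.Adj i (π i) then (1 : ℚ) else 0) ^ 2) /
      (Nat.factorial N : ℚ) - (meanQ N G) ^ 2

theorem variance_compl (N : ℕ) (hN : 2 ≤ N) (G : SimpleGraph (Fin N))
    [DecidableRel G.Adj] :
    varQ N Gᶜ = varQ N G + 1 - 2 * meanQ N G / ((N : ℚ) - 1) := by
  have hptw : ∀ π : Equiv.Perm (Fin N),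
      (∑ i, if Gᶜ.Adj i (π i) then (1:ℚ) else 0)
        = (N:ℚ) - (∑ i, if π i = i then (1:ℚ) else 0)
            - (∑ i, if G.Adj i (π i) then (1:ℚ) else 0) := by
    intro π
    have h : ∀ i : Fin N, (if Gᶜ.Adj i (π i) then (1:ℚ) else 0)
        = (1 - (if π i = i then (1:ℚ) else 0)) - (if G.Adj i (π i) then (1:ℚ) else 0) := by
      intro i
      by_cases h1 : π i = i
      · have : ¬ Gᶜ.Adj i (π i) := by
          rw [h1]; exact Gᶜ.irrefl
        have h2 : ¬ G.Adj i (π i) := by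
          rw [h1]; exact G.irrefl
        simp [this, h1, h2]
      · by_cases h2 : G.Adj i (π i)
        · have : ¬ Gᶜ.Adj i (π i) := fun hc => hc.2 h2
          simp [this, h1, h2]
        · have : Gᶜ.Adj i (π i) := ⟨fun h => h1 h.symm, h2⟩
          simp [this, h1, h2]
    rw [Finset.sum_congr rfl (fun i _ => h i), Finset.sum_sub_distrib,
      Finset.sum_sub_distrib, Finset.sum_const, Finset.card_univ,
      Fintype.card_fin, nsmul_eq_mul, mul_one]
  obtain ⟨t, ht⟩ : ∃ x : ℚ, (∑ i, ∑ k, if G.Adj i k then (1:ℚ) else 0) = x := ⟨_, rfl⟩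
  obtain ⟨q, hq⟩ : ∃ x : ℚ,
      (∑ π : Equiv.Perm (Fin N), (∑ i, if G.Adj i (π i) then (1:ℚ) else 0) ^ 2) = x := ⟨_, rfl⟩
  obtain ⟨m2, hm2def⟩ : ∃ x : ℚ, (Nat.factorial (N-2) : ℚ) = x := ⟨_, rfl⟩
  have hm1 : (Nat.factorial (N-1) : ℚ) = ((N:ℚ) - 1) * m2 := by
    have h1 : (N-1) * Nat.factorial (N-1-1) = Nat.factorial (N-1) :=
      Nat.mul_factorial_pred (by omega)
    have h3 : N - 1 - 1 = N - 2 := by omega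
    rw [h3] at h1
    rw [← h1, ← hm2def]
    push_cast [Nat.cast_sub (show 1 ≤ N by omega)]
    ring
  have hNf : (Nat.factorial N : ℚ) = (N:ℚ) * (((N:ℚ) - 1) * m2) := by
    have h2 : N * Nat.factorial (N-1) = Nat.factorial N :=
      Nat.mul_factorial_pred (by omega)
    rw [← h2]
    push_cast
    rw [hm1]
  have hA := sumS N G
  have hB := sumFix N
  have hC := sumFixSq N
  have hD := sumFixS N G
  rw [ht] at hA
  -- sum over complement
  have hSc : ∑ π : Equiv.Perm (Fin N), (∑ i, if Gᶜ.Adj i (π i) then (1:ℚ) else 0)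
      = (Nat.factorial N : ℚ) * (N:ℚ) - (N:ℚ) * (Nat.factorial (N-1) : ℚ)
        - t * (Nat.factorial (N-1) : ℚ) := by
    rw [Finset.sum_congr rfl (fun π _ => hptw π), Finset.sum_sub_distrib,
      Finset.sum_sub_distrib, Finset.sum_const, Finset.card_univ,
      Fintype.card_perm, Fintype.card_fin, nsmul_eq_mul, hB, hA]
  have hexp : ∀ π : Equiv.Perm (Fin N),
      (∑ i, if Gᶜ.Adj i (π i) then (1:ℚ) else 0) ^ 2
        = (N:ℚ)^2
          - (2*(N:ℚ)) * (∑ i, if π i = i then (1:ℚ) else 0)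
          - (2*(N:ℚ)) * (∑ i, if G.Adj i (π i) then (1:ℚ) else 0)
          + (∑ i, if π i = i then (1:ℚ) else 0)^2
          + 2 * ((∑ j, if π j = j then (1:ℚ) else 0) * (∑ i, if G.Adj i (π i) then (1:ℚ) else 0))
          + (∑ i, if G.Adj i (π i) then (1:ℚ) else 0)^2 := by
    intro π
    rw [hptw π]
    ring
  have hSc2 : ∑ π : Equiv.Perm (Fin N), (∑ i, if Gᶜ.Adj i (π i) then (1:ℚ) else 0) ^ 2
      = (Nat.factorial N : ℚ) * (N:ℚ)^2
        - (2*(N:ℚ)) * ((N:ℚ) * (Nat.factorial (N-1) : ℚ))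
        - (2*(N:ℚ)) * (t * (Nat.factorial (N-1) : ℚ))
        + ((N : ℚ) * (Nat.factorial (N-1) : ℚ) + (N : ℚ) * ((N : ℚ) - 1) * m2)
        + 2 * (t * (((N:ℚ) - 2) * m2))
        + q := by
    rw [Finset.sum_congr rfl (fun π _ => hexp π),
      Finset.sum_add_distrib, Finset.sum_add_distrib, Finset.sum_add_distrib,
      Finset.sum_sub_distrib, Finset.sum_sub_distrib,
      ← Finset.mul_sum, ← Finset.mul_sum, ← Finset.mul_sum,
      Finset.sum_const, Finset.card_univ, Fintype.card_perm, Fintype.card_fin,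
      nsmul_eq_mul, hA, hB, hC, hD, hq, ht, hm2def]
  have hm2ne : m2 ≠ 0 := by
    rw [← hm2def]
    exact_mod_cast Nat.factorial_ne_zero (N-2)
  have hNne : (N:ℚ) ≠ 0 := by
    have : 0 < N := by omega
    positivity
  have hN1ne : (N:ℚ) - 1 ≠ 0 := by
    have : (2:ℚ) ≤ (N:ℚ) := by exact_mod_cast hN
    linarith
  rw [varQ, varQ, meanQ, meanQ, hSc, hSc2, hA, hq, hm1, hNf]
  field_simp
  ring
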